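/- Every convex preorder ≽ on the positive roots of affine type A_{e-1}^{(1)} realizes a unique residue permutation θ: there is exactly one permutation θ = (θ_1,…,θ_e) of [0,e−1] such that Φ_{≻δ} = {kδ + γ^θ_{[a,b]} : 1 ≤ a ≤ b ≤ e−1, k ∈ ℤ} ∩ Φ₊ and Φ_{≺δ} = {kδ − γ^θ_{[a,b]} : 1 ≤ a ≤ b ≤ e−1, k ∈ ℤ} ∩ Φ₊. -/

import Mathlib

/-- The positive root `α(t,L) = α_{t̄} + ⋯ + α_{t̄+L-1}` of affine type `A_{e-1}^{(1)}`,
as an element of the root lattice `ZMod e → ℤ`. -/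
def alphaRoot (e : ℕ) (t : ℤ) (L : ℕ) : ZMod e → ℤ := fun j =>
  (((Finset.range L).filter (fun k : ℕ => ((t + (k : ℤ) : ℤ) : ZMod e) = j)).card : ℤ)

/-- The null root `δ = α_0 + α_1 + ⋯ + α_{e-1}`. -/
def deltaRoot (e : ℕ) : ZMod e → ℤ := fun _ => 1

/-- The set `Φ₊` of positive roots of affine type `A_{e-1}^{(1)}`. -/
def PhiPos (e : ℕ) : Set (ZMod e → ℤ) :=
  {β | ∃ t : ℤ, ∃ L : ℕ, 0 < L ∧ β = alphaRoot e t L}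

/-- Imaginary roots: positive multiples of the null root `δ`. -/
def ImaginaryRoot (e : ℕ) (β : ZMod e → ℤ) : Prop :=
  ∃ m : ℕ, 0 < m ∧ β = fun _ => (m : ℤ)

/-- A convex preorder on `Φ₊`: reflexive, transitive, total, convex, and with mutual
comparability exactly for equal or both-imaginary roots. -/
structure ConvexPreorderOn (e : ℕ) where
  rel : (ZMod e → ℤ) → (ZMod e → ℤ) → Prop
  refl : ∀ β ∈ PhiPos e, rel β β
  trans : ∀ β γ ν, β ∈ PhiPos e → γ ∈ PhiPos e → ν ∈ PhiPos e →
    rel β γ → rel γ ν → rel β ν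
  total : ∀ β γ, β ∈ PhiPos e → γ ∈ PhiPos e → rel β γ ∨ rel γ β
  convex : ∀ β γ, β ∈ PhiPos e → γ ∈ PhiPos e → rel β γ → β + γ ∈ PhiPos e →
    rel β (β + γ) ∧ rel (β + γ) γ
  imag_equiv : ∀ β γ, β ∈ PhiPos e → γ ∈ PhiPos e →
    ((rel β γ ∧ rel γ β) ↔ (β = γ ∨ (ImaginaryRoot e β ∧ ImaginaryRoot e γ)))

/-- The strict relation `β ≻ γ` associated to a convex preorder. -/
def GtRel {e : ℕ} (P : ConvexPreorderOn e) (β γ : ZMod e → ℤ) : Prop :=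
  P.rel β γ ∧ ¬ P.rel γ β

/-- `γ^θ_t := α(θ_t + 1, (θ_{t+1} − θ_t) mod e)` for a residue permutation `θ`
(a bijection from the index set `[1,e]` onto the residues `[0,e−1]`). -/
def gammaTheta (e : ℕ) (θ : ℕ → ℕ) (t : ℕ) : ZMod e → ℤ :=
  alphaRoot e ((θ t : ℤ) + 1) ((θ (t + 1) + e - θ t) % e)

/-- `γ^θ_{[a,b]} := γ^θ_a + γ^θ_{a+1} + ⋯ + γ^θ_b`. -/
def gammaInt (e : ℕ) (θ : ℕ → ℕ) (a b : ℕ) : ZMod e → ℤ :=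
  ∑ t ∈ Finset.Icc a b, gammaTheta e θ t

/-- The convex preorder `P` realizes the residue permutation `θ`:
`Φ_{≻δ} = {kδ + γ^θ_{[a,b]}} ∩ Φ₊` and `Φ_{≺δ} = {kδ − γ^θ_{[a,b]}} ∩ Φ₊`. -/
def Realizes (e : ℕ) (P : ConvexPreorderOn e) (θ : ℕ → ℕ) : Prop :=
  ({β | β ∈ PhiPos e ∧ GtRel P β (deltaRoot e)} =
    {β | β ∈ PhiPos e ∧ ∃ a b : ℕ, ∃ k : ℤ, 1 ≤ a ∧ a ≤ b ∧ b ≤ e - 1 ∧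
      β = k • deltaRoot e + gammaInt e θ a b}) ∧
  ({β | β ∈ PhiPos e ∧ GtRel P (deltaRoot e) β} =
    {β | β ∈ PhiPos e ∧ ∃ a b : ℕ, ∃ k : ℤ, 1 ≤ a ∧ a ≤ b ∧ b ≤ e - 1 ∧
      β = k • deltaRoot e - gammaInt e θ a b})

namespace St9
open Finset

variable {e : ℕ}

lemma alphaRoot_apply (t : ℤ) (L : ℕ) (j : ZMod e) :
    alphaRoot e t L j =
      (((Finset.range L).filter (fun k : ℕ => ((t + (k : ℤ) : ℤ) : ZMod e) = j)).card : ℤ) := rfl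

lemma alphaRoot_zero (t : ℤ) : alphaRoot e t 0 = 0 := by
  funext j; simp [alphaRoot]

lemma alphaRoot_add (t : ℤ) (L M : ℕ) :
    alphaRoot e t (L + M) = alphaRoot e t L + alphaRoot e (t + L) M := by
  funext j
  simp only [alphaRoot, Pi.add_apply]
  rw [Finset.range_add, Finset.filter_union, Finset.card_union_of_disjoint, Nat.cast_add]
  · congr 2
    rw [Finset.filter_map, Finset.card_map]
    congr 1
    apply Finset.filter_congr
    intro k hk
    simp only [addLeftEmbedding, Function.Embedding.coeFn_mk, Function.comp]
    have hcast : (((t + ((L + k : ℕ) : ℤ)) : ℤ) : ZMod e) = (((t + (L:ℤ) + (k : ℤ)) : ℤ) : ZMod e) := by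
      push_cast; ring
    rw [hcast]
  · apply Finset.disjoint_filter_filter
    simp only [Finset.disjoint_left, Finset.mem_range, Finset.mem_map, addLeftEmbedding,
      Function.Embedding.coeFn_mk]
    rintro a ha ⟨b, hb, rfl⟩
    omega

lemma alphaRoot_congr {t t' : ℤ} (h : ((t : ZMod e)) = (t' : ZMod e)) (L : ℕ) :
    alphaRoot e t L = alphaRoot e t' L := by
  funext j
  simp only [alphaRoot]
  congr 1
  congr 1
  apply Finset.filter_congr
  intro k _
  have : ((t + k : ℤ) : ZMod e) = ((t' + k : ℤ) : ZMod e) := by push_cast [h]; ring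
  rw [this]

lemma alphaRoot_e [NeZero e] (t : ℤ) : alphaRoot e t e = deltaRoot e := by
  funext j
  simp only [alphaRoot, deltaRoot]
  norm_cast
  rw [Finset.card_eq_one]
  refine ⟨(j - (t : ZMod e)).val, ?_⟩
  ext k
  simp only [Finset.mem_filter, Finset.mem_range, Finset.mem_singleton]
  constructor
  · rintro ⟨hk, hjk⟩
    have : ((k : ℕ) : ZMod e) = j - (t : ZMod e) := by
      push_cast at hjk
      linear_combination hjk
    rw [← this, ZMod.val_cast_of_lt hk]
  · rintro rfl
    refine ⟨ZMod.val_lt _, ?_⟩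
    push_cast
    rw [ZMod.natCast_val, ZMod.cast_id]
    ring

lemma alphaRoot_add_e [NeZero e] (t : ℤ) (L : ℕ) :
    alphaRoot e t (L + e) = alphaRoot e t L + deltaRoot e := by
  rw [alphaRoot_add, alphaRoot_e]

lemma sum_alphaRoot [NeZero e] (t : ℤ) (L : ℕ) :
    ∑ j : ZMod e, alphaRoot e t L j = L := by
  simp only [alphaRoot]
  norm_cast
  conv_rhs => rw [← Finset.card_range L]
  exact (Finset.card_eq_sum_card_fiberwise (s := Finset.range L) (t := Finset.univ)
    (f := fun k : ℕ => ((t + (k:ℤ) : ℤ) : ZMod e)) (fun x _ => Finset.mem_univ _)).symm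

lemma alphaRoot_nonneg (t : ℤ) (L : ℕ) (j : ZMod e) : 0 ≤ alphaRoot e t L j := by
  simp [alphaRoot]

end St9
namespace St9
open Finset

/-- The real root `β_{ij} = α_{i+1} + ⋯ + α_j` (cyclic interval `(i, j]`). -/
def betaR (e : ℕ) (i j : ZMod e) : ZMod e → ℤ :=
  alphaRoot e ((i.val : ℤ) + 1) ((j - i).val)

variable {e : ℕ}

lemma castval (x : ZMod e) [NeZero e] : ((x.val : ℕ) : ZMod e) = x := by
  rw [ZMod.natCast_val, ZMod.cast_id]

lemma val_pos_of_ne [NeZero e] {i j : ZMod e} (h : i ≠ j) : 0 < (j - i).val := by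
  rcases Nat.eq_zero_or_pos (j - i).val with h0 | h0
  · exact absurd (sub_eq_zero.mp ((ZMod.val_eq_zero _).mp h0)).symm h
  · exact h0

lemma val_add_val_rev [NeZero e] {i j : ZMod e} (h : i ≠ j) :
    (j - i).val + (i - j).val = e := by
  have h1 : i - j = -(j - i) := by ring
  have h2 : j - i ≠ 0 := sub_ne_zero.mpr (Ne.symm h)
  rw [h1, ZMod.neg_val, if_neg h2]
  have := ZMod.val_lt (j - i)
  omega

lemma alphaRoot_add_mul_e [NeZero e] (t : ℤ) (L q : ℕ) :
    alphaRoot e t (L + q * e) = alphaRoot e t L + (q : ℤ) • deltaRoot e := by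
  induction q with
  | zero => simp
  | succ q ih =>
      have : L + (q + 1) * e = (L + q * e) + e := by ring
      rw [this, alphaRoot_add_e, ih]
      push_cast
      funext r
      simp [deltaRoot, add_smul]
      ring

lemma betaR_add_betaR [NeZero e] {i j k : ZMod e} (hij : i ≠ j) (hjk : j ≠ k) :
    ∃ w : ℕ, w ≤ 1 ∧ betaR e i j + betaR e j k = betaR e i k + (w : ℤ) • deltaRoot e := by
  have hAe := ZMod.val_lt (j - i)
  have hBe := ZMod.val_lt (k - j)
  have hCe := ZMod.val_lt (k - i)
  have hA1 := val_pos_of_ne hij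
  have hB1 := val_pos_of_ne hjk
  have hsum : (k - i).val = ((j - i).val + (k - j).val) % e := by
    have h1 : k - i = (j - i) + (k - j) := by ring
    rw [h1, ZMod.val_add]
  have key : betaR e i j + betaR e j k
      = alphaRoot e ((i.val : ℤ) + 1) ((j - i).val + (k - j).val) := by
    rw [alphaRoot_add]
    unfold betaR
    congr 1
    apply alphaRoot_congr
    push_cast
    simp only [castval, ZMod.natCast_val, ZMod.cast_id]
    ring
  have epos : 0 < e := Nat.pos_of_ne_zero (NeZero.ne e)
  have hcase : (j - i).val + (k - j).val = (k - i).val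
      ∨ (j - i).val + (k - j).val = (k - i).val + e := by
    rcases Nat.lt_or_ge ((j - i).val + (k - j).val) e with h | h
    · left; rw [hsum, Nat.mod_eq_of_lt h]
    · right
      have h2 : (j - i).val + (k - j).val - e < e := by omega
      rw [hsum, Nat.mod_eq_sub_mod h, Nat.mod_eq_of_lt h2]
      omega
  rcases hcase with hc | hc
  · exact ⟨0, by omega, by rw [key, hc]; simp [betaR]⟩
  · refine ⟨1, le_refl _, ?_⟩
    rw [key, hc]
    have h2 : (k - i).val + e = (k - i).val + 1 * e := by ring
    rw [h2, alphaRoot_add_mul_e]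
    simp [betaR]

lemma betaR_add_betaR_rev [NeZero e] {i j : ZMod e} (h : i ≠ j) :
    betaR e i j + betaR e j i = deltaRoot e := by
  have key : betaR e i j + betaR e j i
      = alphaRoot e ((i.val : ℤ) + 1) ((j - i).val + (i - j).val) := by
    rw [alphaRoot_add]
    unfold betaR
    congr 1
    apply alphaRoot_congr
    push_cast
    simp only [castval, ZMod.natCast_val, ZMod.cast_id]
    ring
  rw [key, val_add_val_rev h, alphaRoot_e]

lemma betaR_apply [NeZero e] {i j : ZMod e} (hij : i ≠ j) (r : ZMod e) :
    betaR e i j r = if r ≠ i ∧ (r - i).val ≤ (j - i).val then 1 else 0 := by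
  have he : 1 < e := by
    rcases Nat.lt_or_ge e 2 with h | h
    · interval_cases e
      · exact absurd rfl (NeZero.ne 0)
      · exact absurd (Subsingleton.elim i j) hij
    · omega
  set A := (j - i).val with hA
  have hA1 : 0 < A := val_pos_of_ne hij
  have hAe : A < e := ZMod.val_lt _
  rw [betaR, alphaRoot_apply]
  by_cases hcond : r ≠ i ∧ (r - i).val ≤ A
  · rw [if_pos hcond]
    obtain ⟨hri, hrA⟩ := hcond
    set V := (r - i).val with hV
    have hV1 : 0 < V := val_pos_of_ne (Ne.symm hri)
    obtain ⟨W, hW⟩ : ∃ W, V = W + 1 := ⟨V - 1, by omega⟩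
    have hWr : ((W + 1 : ℕ) : ZMod e) = r - i := by rw [← hW, hV, castval]
    have : (Finset.range A).filter
        (fun k : ℕ => ((((i.val : ℤ) + 1) + (k : ℤ) : ℤ) : ZMod e) = r) = {W} := by
      ext k
      simp only [Finset.mem_filter, Finset.mem_range, Finset.mem_singleton]
      constructor
      · rintro ⟨hk, hkr⟩
        have hcast : (((k + 1 : ℕ) : ℕ) : ZMod e) = r - i := by
          push_cast at hkr ⊢
          simp only [castval, ZMod.natCast_val, ZMod.cast_id] at hkr
          linear_combination hkr
        have : (r - i).val = k + 1 := by rw [← hcast, ZMod.val_cast_of_lt (by omega)]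
        omega
      · rintro rfl
        refine ⟨by omega, ?_⟩
        push_cast at hWr ⊢
        simp only [castval, ZMod.natCast_val, ZMod.cast_id]
        linear_combination hWr
    rw [this]
    simp
  · rw [if_neg hcond]
    push_neg at hcond
    have : (Finset.range A).filter
        (fun k : ℕ => ((((i.val : ℤ) + 1) + (k : ℤ) : ℤ) : ZMod e) = r) = ∅ := by
      ext k
      simp only [Finset.mem_filter, Finset.mem_range, Finset.notMem_empty, iff_false, not_and]
      intro hk hkr
      have hcast : (((k + 1 : ℕ) : ℕ) : ZMod e) = r - i := by
        push_cast at hkr ⊢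
        rw [castval] at hkr
        linear_combination hkr
      have hval : (r - i).val = k + 1 := by rw [← hcast, ZMod.val_cast_of_lt (by omega)]
      have hri : r ≠ i := by
        intro h0
        rw [h0, sub_self, ZMod.val_zero] at hval
        omega
      exact absurd hval (by have := hcond hri; omega)
    rw [this]
    simp

lemma betaR_apply_right [NeZero e] {i j : ZMod e} (hij : i ≠ j) : betaR e i j j = 1 := by
  rw [betaR_apply hij, if_pos ⟨Ne.symm hij, le_refl _⟩]

lemma betaR_apply_left [NeZero e] {i j : ZMod e} (hij : i ≠ j) : betaR e i j i = 0 := by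
  rw [betaR_apply hij, if_neg]
  rintro ⟨h, -⟩
  exact h rfl

lemma betaR_apply_mem [NeZero e] {i j : ZMod e} (hij : i ≠ j) (r : ZMod e) :
    betaR e i j r = 0 ∨ betaR e i j r = 1 := by
  rw [betaR_apply hij]
  split <;> simp

lemma sum_betaR [NeZero e] (i j : ZMod e) :
    ∑ r : ZMod e, betaR e i j r = ((j - i).val : ℤ) :=
  sum_alphaRoot _ _

end St9
namespace St9
open Finset

variable {e : ℕ}

lemma smul_delta_eq (m : ℤ) : m • deltaRoot e = fun _ => m := by
  funext r; simp [deltaRoot]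

lemma deltaRoot_mem [NeZero e] : deltaRoot e ∈ PhiPos e :=
  ⟨0, e, Nat.pos_of_ne_zero (NeZero.ne e), (alphaRoot_e 0).symm⟩

lemma imag_mem [NeZero e] {β : ZMod e → ℤ} (h : ImaginaryRoot e β) : β ∈ PhiPos e := by
  obtain ⟨m, hm, rfl⟩ := h
  have epos : 0 < e := Nat.pos_of_ne_zero (NeZero.ne e)
  refine ⟨0, 0 + m * e, by simpa using Nat.mul_pos hm epos, ?_⟩
  rw [alphaRoot_add_mul_e, alphaRoot_zero, smul_delta_eq]
  funext r; simp

lemma deltaRoot_imag : ImaginaryRoot e (deltaRoot e) := ⟨1, one_pos, by funext r; simp [deltaRoot]⟩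

lemma betaR_mem [NeZero e] {i j : ZMod e} (hij : i ≠ j) (k : ℕ) :
    betaR e i j + (k : ℤ) • deltaRoot e ∈ PhiPos e := by
  refine ⟨(i.val : ℤ) + 1, (j - i).val + k * e, ?_, ?_⟩
  · have := val_pos_of_ne hij; positivity
  · rw [alphaRoot_add_mul_e]; rfl

lemma phiPos_nonneg {β : ZMod e → ℤ} (h : β ∈ PhiPos e) (r : ZMod e) : 0 ≤ β r := by
  obtain ⟨t, L, hL, rfl⟩ := h; exact alphaRoot_nonneg t L r

lemma phiPos_ne_zero [NeZero e] {β : ZMod e → ℤ} (h : β ∈ PhiPos e) : β ≠ 0 := by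
  obtain ⟨t, L, hL, rfl⟩ := h
  intro h0
  have := sum_alphaRoot (e := e) t L
  rw [h0] at this
  simp only [Pi.zero_apply, Finset.sum_const_zero] at this
  omega

lemma mem_phiPos_iff [NeZero e] {β : ZMod e → ℤ} :
    β ∈ PhiPos e ↔ (ImaginaryRoot e β ∨
      ∃ i j : ZMod e, ∃ k : ℕ, i ≠ j ∧ β = betaR e i j + (k : ℤ) • deltaRoot e) := by
  have epos : 0 < e := Nat.pos_of_ne_zero (NeZero.ne e)
  constructor
  · rintro ⟨t, L, hL, rfl⟩
    obtain ⟨q, r0, hre, rfl⟩ : ∃ q r0, r0 < e ∧ L = r0 + q * e :=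
      ⟨L / e, L % e, Nat.mod_lt _ epos, (Nat.mod_add_div' L e).symm⟩
    rcases Nat.eq_zero_or_pos r0 with hr | hr
    · left
      subst hr
      have hq : 0 < q := by
        rcases Nat.eq_zero_or_pos q with h0 | h0
        · subst h0; simp at hL
        · exact h0
      refine ⟨q, hq, ?_⟩
      rw [alphaRoot_add_mul_e, alphaRoot_zero, smul_delta_eq]
      funext r; simp
    · right
      set i : ZMod e := (t : ZMod e) - 1 with hi
      set j : ZMod e := i + (r0 : ℕ) with hj
      have hji : j - i = ((r0 : ℕ) : ZMod e) := by rw [hj]; ring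
      have hval : (j - i).val = r0 := by rw [hji, ZMod.val_cast_of_lt hre]
      have hij : i ≠ j := by
        intro h0
        have : (j - i).val = 0 := by rw [h0, sub_self, ZMod.val_zero]
        omega
      refine ⟨i, j, q, hij, ?_⟩
      rw [alphaRoot_add_mul_e]
      congr 1
      rw [betaR, hval]
      apply alphaRoot_congr
      push_cast
      simp only [castval, ZMod.natCast_val, ZMod.cast_id]
      rw [hi]
      ring
  · rintro (h | ⟨i, j, k, hij, rfl⟩)
    · exact imag_mem h
    · exact betaR_mem hij k

lemma real_not_imag [NeZero e] {i j : ZMod e} (hij : i ≠ j) (k : ℤ) :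
    ¬ ImaginaryRoot e (betaR e i j + k • deltaRoot e) := by
  rintro ⟨m, hm, hmeq⟩
  have h1 := congrFun hmeq i
  have h2 := congrFun hmeq j
  simp only [Pi.add_apply, smul_delta_eq] at h1 h2
  rw [betaR_apply_left hij] at h1
  rw [betaR_apply_right hij] at h2
  simp at h1 h2
  omega

lemma betaR_inj [NeZero e] (he : 1 < e) {i j p q : ZMod e} (hij : i ≠ j) (hpq : p ≠ q)
    (h : betaR e i j = betaR e p q) : i = p ∧ j = q := by
  have hsum : ((j - i).val : ℤ) = ((q - p).val : ℤ) := by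
    rw [← sum_betaR i j, ← sum_betaR p q, h]
  have hAB : (j - i).val = (q - p).val := by exact_mod_cast hsum
  have hAe : (j - i).val < e := ZMod.val_lt _
  have hA1 : 0 < (j - i).val := val_pos_of_ne hij
  have hcastA : (((j - i).val : ℕ) : ZMod e) = j - i := castval _
  have hcastB : (((j - i).val : ℕ) : ZMod e) = q - p := by rw [hAB]; exact castval _
  -- evaluate h at q
  have hq := congrFun h q
  rw [betaR_apply hij, betaR_apply_right hpq] at hq
  have hqi : q ≠ i ∧ (q - i).val ≤ (j - i).val := by
    by_contra hc
    rw [if_neg hc] at hq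
    norm_num at hq
  obtain ⟨hqi1, hqi2⟩ := hqi
  -- evaluate h at q + 1
  have hrhs : betaR e p q (q + 1) = 0 := by
    rw [betaR_apply hpq, if_neg]
    rintro ⟨hne, hle⟩
    have hc1 : q + 1 - p = (((j - i).val + 1 : ℕ) : ZMod e) := by
      push_cast
      rw [hcastB]
      ring
    rcases Nat.lt_or_ge ((j - i).val + 1) e with hlt | hge
    · rw [hc1, ZMod.val_cast_of_lt hlt] at hle
      omega
    · have hv : (j - i).val + 1 = e := by omega
      have : q + 1 - p = 0 := by rw [hc1, hv, ZMod.natCast_self]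
      exact hne (by linear_combination this)
  have hq1 := congrFun h (q + 1)
  rw [betaR_apply hij, hrhs] at hq1
  have hq1' : ¬(q + 1 ≠ i ∧ (q + 1 - i).val ≤ (j - i).val) := by
    intro hc
    rw [if_pos hc] at hq1
    norm_num at hq1
  have hjq : j = q := by
    by_cases hcase : q + 1 = i
    · have hqiv : q - i = ((e - 1 : ℕ) : ZMod e) := by
        have h2 : ((e - 1 : ℕ) : ZMod e) = ((e : ℕ) : ZMod e) - 1 := by
          rw [Nat.cast_sub (by omega)]; simp
        rw [h2, ZMod.natCast_self]
        linear_combination hcase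
      have hv : (q - i).val = e - 1 := by rw [hqiv, ZMod.val_cast_of_lt (by omega)]
      have hAe1 : (j - i).val = e - 1 := by omega
      have hfin : j - i = q - i := by rw [← hcastA, hAe1, ← hv, castval]
      linear_combination hfin
    · push_neg at hq1'
      have hle := hq1' hcase
      have hCq1 : 0 < (q - i).val := val_pos_of_ne (Ne.symm hqi1)
      have hCe : (q - i).val < e := ZMod.val_lt _
      have hstep : q + 1 - i = (((q - i).val + 1 : ℕ) : ZMod e) := by
        push_cast
        rw [castval]
        ring
      rcases Nat.lt_or_ge ((q - i).val + 1) e with hlt | hge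
      · rw [hstep, ZMod.val_cast_of_lt hlt] at hle
        have hCqA : (q - i).val = (j - i).val := by omega
        have hfin : q - i = j - i := by rw [← hcastA, ← hCqA, castval]
        linear_combination -hfin
      · have hv : (q - i).val + 1 = e := by omega
        have : q + 1 - i = 0 := by rw [hstep, hv, ZMod.natCast_self]
        exact absurd (by linear_combination this) hcase
  refine ⟨?_, hjq⟩
  have hfin : j - i = q - p := by rw [← hcastA, hcastB]
  rw [hjq] at hfin
  linear_combination -hfin

lemma decomp_unique [NeZero e] (he : 1 < e) {i j p q : ZMod e} (hij : i ≠ j) (hpq : p ≠ q)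
    {k m : ℤ} (h : betaR e i j + k • deltaRoot e = betaR e p q + m • deltaRoot e) :
    i = p ∧ j = q ∧ k = m := by
  have h1 := congrFun h i
  have h2 := congrFun h j
  simp only [Pi.add_apply, smul_delta_eq] at h1 h2
  rw [betaR_apply_left hij] at h1
  rw [betaR_apply_right hij] at h2
  have hx := betaR_apply_mem hpq i
  have hy := betaR_apply_mem hpq j
  have hkm : k = m := by rcases hx with hx | hx <;> rcases hy with hy | hy <;> omega
  subst hkm
  have hbb : betaR e i j = betaR e p q := by
    have := congrArg (fun f => f - k • deltaRoot e) h
    simpa using this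
  obtain ⟨h1, h2⟩ := betaR_inj he hij hpq hbb
  exact ⟨h1, h2, rfl⟩

lemma phiPos_k_nonneg [NeZero e] {i j : ZMod e} (hij : i ≠ j) {k : ℤ}
    (h : betaR e i j + k • deltaRoot e ∈ PhiPos e) : 0 ≤ k := by
  have := phiPos_nonneg h i
  simp only [Pi.add_apply, smul_delta_eq] at this
  rw [betaR_apply_left hij] at this
  omega

end St9
namespace St9
open Finset

variable {e : ℕ}

lemma not_both [NeZero e] (P : ConvexPreorderOn e) {β : ZMod e → ℤ} (hβ : β ∈ PhiPos e)
    (hni : ¬ ImaginaryRoot e β) : ¬ (P.rel β (deltaRoot e) ∧ P.rel (deltaRoot e) β) := by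
  intro hb
  rcases (P.imag_equiv β (deltaRoot e) hβ deltaRoot_mem).mp hb with h | ⟨h1, _⟩
  · exact hni (h ▸ deltaRoot_imag)
  · exact hni h1

lemma gt_or_gt [NeZero e] (P : ConvexPreorderOn e) {β : ZMod e → ℤ} (hβ : β ∈ PhiPos e)
    (hni : ¬ ImaginaryRoot e β) : GtRel P β (deltaRoot e) ∨ GtRel P (deltaRoot e) β := by
  rcases P.total β (deltaRoot e) hβ deltaRoot_mem with h | h
  · exact Or.inl ⟨h, fun h' => not_both P hβ hni ⟨h, h'⟩⟩
  · exact Or.inr ⟨h, fun h' => not_both P hβ hni ⟨h', h⟩⟩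

lemma not_gt_and_gt [NeZero e] (P : ConvexPreorderOn e) {β γ : ZMod e → ℤ} :
    ¬ (GtRel P β γ ∧ GtRel P γ β) := by
  rintro ⟨⟨h1, h2⟩, ⟨h3, h4⟩⟩
  exact h2 h3

lemma step_up [NeZero e] (P : ConvexPreorderOn e) {β : ZMod e → ℤ} (hβ : β ∈ PhiPos e)
    (hni : ¬ ImaginaryRoot e β) (hβδ : β + deltaRoot e ∈ PhiPos e)
    (hniδ : ¬ ImaginaryRoot e (β + deltaRoot e)) :
    GtRel P β (deltaRoot e) ↔ GtRel P (β + deltaRoot e) (deltaRoot e) := by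
  constructor
  · rintro ⟨h1, h2⟩
    have hc := P.convex β (deltaRoot e) hβ deltaRoot_mem h1 hβδ
    refine ⟨hc.2, fun h' => not_both P hβδ hniδ ⟨hc.2, h'⟩⟩
  · rintro ⟨h1, h2⟩
    rcases gt_or_gt P hβ hni with h | h
    · exact h
    · exfalso
      have hδβ : deltaRoot e + β ∈ PhiPos e := by rwa [add_comm]
      have hc := P.convex (deltaRoot e) β deltaRoot_mem hβ h.1 hδβ
      have hrel : P.rel (deltaRoot e) (β + deltaRoot e) := by
        have := hc.1
        rwa [add_comm] at this
      exact not_both P hβδ hniδ ⟨h1, hrel⟩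

lemma gt_closed [NeZero e] (P : ConvexPreorderOn e) {β γ : ZMod e → ℤ}
    (hβ : β ∈ PhiPos e) (hγ : γ ∈ PhiPos e)
    (h1 : GtRel P β (deltaRoot e)) (h2 : GtRel P γ (deltaRoot e))
    (hs : β + γ ∈ PhiPos e) (hni : ¬ ImaginaryRoot e (β + γ)) :
    GtRel P (β + γ) (deltaRoot e) := by
  rcases P.total β γ hβ hγ with h | h
  · have hc := P.convex β γ hβ hγ h hs
    have hrel : P.rel (β + γ) (deltaRoot e) :=
      P.trans _ _ _ hs hγ deltaRoot_mem hc.2 h2.1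
    exact ⟨hrel, fun h' => not_both P hs hni ⟨hrel, h'⟩⟩
  · have hγβ : γ + β ∈ PhiPos e := by rwa [add_comm]
    have hc := P.convex γ β hγ hβ h hγβ
    have hc2 : P.rel (β + γ) β := by have := hc.2; rwa [add_comm] at this
    have hrel : P.rel (β + γ) (deltaRoot e) :=
      P.trans _ _ _ hs hβ deltaRoot_mem hc2 h1.1
    exact ⟨hrel, fun h' => not_both P hs hni ⟨hrel, h'⟩⟩

lemma lt_closed [NeZero e] (P : ConvexPreorderOn e) {β γ : ZMod e → ℤ}
    (hβ : β ∈ PhiPos e) (hγ : γ ∈ PhiPos e)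
    (h1 : GtRel P (deltaRoot e) β) (h2 : GtRel P (deltaRoot e) γ)
    (hs : β + γ ∈ PhiPos e) (hni : ¬ ImaginaryRoot e (β + γ)) :
    GtRel P (deltaRoot e) (β + γ) := by
  rcases P.total β γ hβ hγ with h | h
  · have hc := P.convex β γ hβ hγ h hs
    have hrel : P.rel (deltaRoot e) (β + γ) :=
      P.trans _ _ _ deltaRoot_mem hβ hs h1.1 hc.1
    exact ⟨hrel, fun h' => not_both P hs hni ⟨h', hrel⟩⟩
  · have hγβ : γ + β ∈ PhiPos e := by rwa [add_comm]
    have hc := P.convex γ β hγ hβ h hγβ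
    have hc1 : P.rel γ (β + γ) := by have := hc.1; rwa [add_comm] at this
    have hrel : P.rel (deltaRoot e) (β + γ) :=
      P.trans _ _ _ deltaRoot_mem hγ hs h2.1 hc1
    exact ⟨hrel, fun h' => not_both P hs hni ⟨h', hrel⟩⟩

/-- The relation `i ⊲ j` iff `β_{ij} ≻ δ`. -/
def OrdR (e : ℕ) (P : ConvexPreorderOn e) (i j : ZMod e) : Prop :=
  i ≠ j ∧ GtRel P (betaR e i j) (deltaRoot e)

lemma gt_shift [NeZero e] (P : ConvexPreorderOn e) {i j : ZMod e} (hij : i ≠ j) (k : ℕ) :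
    GtRel P (betaR e i j + (k : ℤ) • deltaRoot e) (deltaRoot e) ↔
      GtRel P (betaR e i j) (deltaRoot e) := by
  induction k with
  | zero => simp
  | succ k ih =>
      have hsplit : betaR e i j + ((k + 1 : ℕ) : ℤ) • deltaRoot e
          = (betaR e i j + (k : ℤ) • deltaRoot e) + deltaRoot e := by
        push_cast
        funext r
        simp [deltaRoot, add_smul]
        ring
      rw [hsplit, ← step_up P (betaR_mem hij k) (real_not_imag hij k) ?_ ?_, ih]
      · rw [← hsplit]; exact betaR_mem hij (k + 1)
      · rw [← hsplit]; exact real_not_imag hij ((k + 1 : ℕ) : ℤ)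

lemma pair_not_both_gt [NeZero e] (P : ConvexPreorderOn e) {β γ : ZMod e → ℤ}
    (hβ : β ∈ PhiPos e) (hγ : γ ∈ PhiPos e) (hsum : β + γ = deltaRoot e)
    (h1 : GtRel P β (deltaRoot e)) (h2 : GtRel P γ (deltaRoot e)) : False := by
  have hs : β + γ ∈ PhiPos e := by rw [hsum]; exact deltaRoot_mem
  rcases P.total β γ hβ hγ with h | h
  · have hc := P.convex β γ hβ hγ h hs
    rw [hsum] at hc
    exact h2.2 hc.2
  · have hs' : γ + β ∈ PhiPos e := by rwa [add_comm]
    have hc := P.convex γ β hγ hβ h hs'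
    rw [add_comm, hsum] at hc
    exact h1.2 hc.2

lemma pair_not_both_lt [NeZero e] (P : ConvexPreorderOn e) {β γ : ZMod e → ℤ}
    (hβ : β ∈ PhiPos e) (hγ : γ ∈ PhiPos e) (hsum : β + γ = deltaRoot e)
    (h1 : GtRel P (deltaRoot e) β) (h2 : GtRel P (deltaRoot e) γ) : False := by
  have hs : β + γ ∈ PhiPos e := by rw [hsum]; exact deltaRoot_mem
  rcases P.total β γ hβ hγ with h | h
  · have hc := P.convex β γ hβ hγ h hs
    rw [hsum] at hc
    exact h1.2 hc.1
  · have hs' : γ + β ∈ PhiPos e := by rwa [add_comm]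
    have hc := P.convex γ β hγ hβ h hs'
    rw [add_comm, hsum] at hc
    exact h2.2 hc.1

lemma ord_total [NeZero e] (P : ConvexPreorderOn e) {i j : ZMod e} (hij : i ≠ j) :
    OrdR e P i j ∨ OrdR e P j i := by
  rcases gt_or_gt P (by simpa using betaR_mem hij 0) (by simpa using real_not_imag hij (0 : ℤ))
    with h | h
  · exact Or.inl ⟨hij, h⟩
  · right
    refine ⟨Ne.symm hij, ?_⟩
    rcases gt_or_gt P (by simpa using betaR_mem (Ne.symm hij) 0)
      (by simpa using real_not_imag (Ne.symm hij) (0 : ℤ)) with h' | h'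
    · exact h'
    · exact absurd (pair_not_both_lt P (by simpa using betaR_mem hij 0)
        (by simpa using betaR_mem (Ne.symm hij) 0) (betaR_add_betaR_rev hij) h h') id

lemma ord_asymm [NeZero e] (P : ConvexPreorderOn e) {i j : ZMod e} :
    OrdR e P i j → ¬ OrdR e P j i := by
  rintro ⟨hij, h1⟩ ⟨hji, h2⟩
  exact pair_not_both_gt P (by simpa using betaR_mem hij 0)
    (by simpa using betaR_mem hji 0) (betaR_add_betaR_rev hij) h1 h2

lemma ord_trans [NeZero e] (P : ConvexPreorderOn e) {i j k : ZMod e} :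
    OrdR e P i j → OrdR e P j k → OrdR e P i k := by
  rintro ⟨hij, h1⟩ ⟨hjk, h2⟩
  have hik : i ≠ k := by
    rintro rfl
    exact ord_asymm P ⟨hij, h1⟩ ⟨hjk, h2⟩
  obtain ⟨w, hw, hsum⟩ := betaR_add_betaR hij hjk
  have hmem : betaR e i k + (w : ℤ) • deltaRoot e ∈ PhiPos e := betaR_mem hik w
  have hni : ¬ ImaginaryRoot e (betaR e i k + (w : ℤ) • deltaRoot e) := real_not_imag hik w
  have := gt_closed P (by simpa using betaR_mem hij 0) (by simpa using betaR_mem hjk 0)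
    h1 h2 (by rw [hsum]; exact hmem) (by rw [hsum]; exact hni)
  rw [hsum] at this
  exact ⟨hik, (gt_shift P hik w).mp this⟩

lemma gt_iff_ord [NeZero e] (P : ConvexPreorderOn e) {i j : ZMod e} (hij : i ≠ j) (k : ℕ) :
    GtRel P (betaR e i j + (k : ℤ) • deltaRoot e) (deltaRoot e) ↔ OrdR e P i j := by
  rw [gt_shift P hij k]
  exact ⟨fun h => ⟨hij, h⟩, fun h => h.2⟩

lemma lt_iff_ord [NeZero e] (P : ConvexPreorderOn e) {i j : ZMod e} (hij : i ≠ j) (k : ℕ) :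
    GtRel P (deltaRoot e) (betaR e i j + (k : ℤ) • deltaRoot e) ↔ OrdR e P j i := by
  constructor
  · intro h
    rcases ord_total P hij with h' | h'
    · exfalso
      have := (gt_iff_ord P hij k).mpr h'
      exact not_gt_and_gt P ⟨this, h⟩
    · exact h'
  · intro h
    rcases gt_or_gt P (betaR_mem hij k) (real_not_imag hij k) with h' | h'
    · exfalso
      exact ord_asymm P ((gt_iff_ord P hij k).mp h') h
    · exact h'

end St9
namespace St9
open Finset

variable {e : ℕ}

/-- The reflexive closure of `OrdR`. -/
def ordLE (e : ℕ) (P : ConvexPreorderOn e) (x y : ZMod e) : Prop :=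
  x = y ∨ OrdR e P x y

section SortSec

variable [NeZero e] (P : ConvexPreorderOn e)

lemma ordLE_trans : ∀ x y z : ZMod e, ordLE e P x y → ordLE e P y z → ordLE e P x z := by
  rintro x y z (rfl | h1) h2
  · exact h2
  rcases h2 with rfl | h2
  · exact Or.inr h1
  · exact Or.inr (ord_trans P h1 h2)

lemma ordLE_antisymm : ∀ x y : ZMod e, ordLE e P x y → ordLE e P y x → x = y := by
  rintro x y (rfl | h1) h2
  · rfl
  rcases h2 with rfl | h2
  · rfl
  · exact absurd h2 (ord_asymm P h1)

lemma ordLE_total : ∀ x y : ZMod e, ordLE e P x y ∨ ordLE e P y x := by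
  intro x y
  by_cases h : x = y
  · exact Or.inl (Or.inl h)
  · rcases ord_total P h with h1 | h1
    · exact Or.inl (Or.inr h1)
    · exact Or.inr (Or.inr h1)

noncomputable local instance ordLE_dec : DecidableRel (ordLE e P) := Classical.decRel _
local instance ordLE_transI : IsTrans (ZMod e) (ordLE e P) := ⟨ordLE_trans P⟩
local instance ordLE_antisymmI : Std.Antisymm (ordLE e P) := ⟨ordLE_antisymm P⟩
local instance ordLE_totalI : Std.Total (ordLE e P) := ⟨ordLE_total P⟩

noncomputable def sortedList : List (ZMod e) := Finset.sort Finset.univ (ordLE e P)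

lemma sortedList_length : (sortedList P).length = e := by
  rw [sortedList, Finset.length_sort, Finset.card_univ, ZMod.card]

lemma sortedList_nodup : (sortedList P).Nodup := Finset.sort_nodup _ _

lemma sortedList_mem (x : ZMod e) : x ∈ sortedList P := by
  rw [sortedList, Finset.mem_sort]
  exact Finset.mem_univ x

lemma sortedList_sorted : List.Pairwise (ordLE e P) (sortedList P) := Finset.pairwise_sort _ _

lemma sortedList_ord {n m : ℕ} (hn : n < e) (hm : m < e) (hnm : n < m) :
    OrdR e P ((sortedList P)[n]'(by rw [sortedList_length]; exact hn))
      ((sortedList P)[m]'(by rw [sortedList_length]; exact hm)) := by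
  have hL := sortedList_length P
  have h1 := List.pairwise_iff_get.mp (sortedList_sorted P)
    ⟨n, by rw [hL]; exact hn⟩ ⟨m, by rw [hL]; exact hm⟩ (by simp [Fin.lt_def, hnm])
  rcases h1 with h1 | h1
  · exfalso
    simp only [List.get_eq_getElem] at h1
    rw [(sortedList_nodup P).getElem_inj_iff] at h1
    omega
  · simpa using h1

/-- The residue permutation realized by `P`, as a function `ℕ → ℕ` via indices in `[1,e]`. -/
noncomputable def theta (P : ConvexPreorderOn e) : ℕ → ℕ :=
  fun t => ((sortedList P).getD (t - 1) 0).val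

/-- The residue `θ_t` as an element of `ZMod e`. -/
noncomputable def thetaZ (P : ConvexPreorderOn e) : ℕ → ZMod e :=
  fun t => (sortedList P).getD (t - 1) 0

lemma thetaZ_eq {t : ℕ} (h1 : 1 ≤ t) (h2 : t ≤ e) :
    thetaZ P t = (sortedList P)[t - 1]'(by rw [sortedList_length]; omega) := by
  rw [thetaZ, List.getD_eq_getElem]

lemma theta_cast {t : ℕ} : ((theta P t : ℕ) : ZMod e) = thetaZ P t := castval _

lemma theta_lt (t : ℕ) : theta P t < e := ZMod.val_lt _

lemma thetaZ_ord {s t : ℕ} (h1 : 1 ≤ s) (h2 : s < t) (h3 : t ≤ e) :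
    OrdR e P (thetaZ P s) (thetaZ P t) := by
  rw [thetaZ_eq P h1 (by omega), thetaZ_eq P (by omega) h3]
  exact sortedList_ord P (by omega) (by omega) (by omega)

lemma thetaZ_inj {s t : ℕ} (h1 : 1 ≤ s) (h2 : s ≤ e) (h3 : 1 ≤ t) (h4 : t ≤ e)
    (h : thetaZ P s = thetaZ P t) : s = t := by
  rw [thetaZ_eq P h1 h2, thetaZ_eq P h3 h4, (sortedList_nodup P).getElem_inj_iff] at h
  omega

lemma thetaZ_surj (x : ZMod e) : ∃ t, 1 ≤ t ∧ t ≤ e ∧ thetaZ P t = x := by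
  obtain ⟨n, hn, hx⟩ := List.mem_iff_getElem.mp (sortedList_mem P x)
  rw [sortedList_length] at hn
  exact ⟨n + 1, by omega, by omega, by rw [thetaZ_eq P (by omega) (by omega)]; simpa using hx⟩

lemma theta_bijOn : Set.BijOn (theta P) (Set.Icc 1 e) (Set.Iio e) := by
  refine ⟨fun t _ => theta_lt P t, ?_, ?_⟩
  · intro s hs t ht h
    have : thetaZ P s = thetaZ P t := by
      rw [← theta_cast, ← theta_cast, h]
    exact thetaZ_inj P hs.1 hs.2 ht.1 ht.2 this
  · intro x hx
    obtain ⟨t, h1, h2, h3⟩ := thetaZ_surj P ((x : ℕ) : ZMod e)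
    refine ⟨t, ⟨h1, h2⟩, ?_⟩
    have : theta P t = ((x : ℕ) : ZMod e).val := by rw [theta, ← h3, thetaZ]
    rw [this, ZMod.val_cast_of_lt hx]

/-- Characterization of the order via positions in `theta`. -/
lemma ord_iff_pos {i j : ZMod e} (hij : i ≠ j) :
    OrdR e P i j ↔ ∃ s t : ℕ, 1 ≤ s ∧ s < t ∧ t ≤ e ∧ thetaZ P s = i ∧ thetaZ P t = j := by
  constructor
  · intro h
    obtain ⟨s, hs1, hs2, hsx⟩ := thetaZ_surj P i
    obtain ⟨t, ht1, ht2, htx⟩ := thetaZ_surj P j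
    have hst : s ≠ t := by rintro rfl; rw [hsx] at htx; exact hij htx
    rcases Nat.lt_or_ge s t with hlt | hge
    · exact ⟨s, t, hs1, hlt, ht2, hsx, htx⟩
    · exfalso
      have := thetaZ_ord P ht1 (by omega) hs2
      rw [hsx, htx] at this
      exact ord_asymm P h this
  · rintro ⟨s, t, h1, h2, h3, rfl, rfl⟩
    exact thetaZ_ord P h1 h2 h3

end SortSec

end St9
namespace St9
open Finset

variable {e : ℕ}

lemma cast_ne_of_ne [NeZero e] {m n : ℕ} (hm : m < e) (hn : n < e) (h : m ≠ n) :
    (m : ZMod e) ≠ (n : ZMod e) := by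
  intro hc
  apply h
  rw [← ZMod.val_cast_of_lt hm, ← ZMod.val_cast_of_lt hn, hc]

lemma gammaTheta_eq [NeZero e] {θ : ℕ → ℕ} {t : ℕ} (h1 : θ t < e) (h2 : θ (t + 1) < e)
    (hne : θ t ≠ θ (t + 1)) :
    gammaTheta e θ t = betaR e ((θ t : ℕ) : ZMod e) ((θ (t + 1) : ℕ) : ZMod e) := by
  rw [gammaTheta, betaR, ZMod.val_cast_of_lt h1]
  congr 1
  have hc : ((θ (t+1) : ℕ) : ZMod e) - ((θ t : ℕ) : ZMod e)
      = ((θ (t+1) + e - θ t : ℕ) : ZMod e) := by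
    rw [Nat.cast_sub (by omega), Nat.cast_add, ZMod.natCast_self]
    ring
  rw [hc, ZMod.val_natCast]

lemma gammaInt_decomp [NeZero e] (he : 1 < e) {θ : ℕ → ℕ}
    (hmap : ∀ t, 1 ≤ t → t ≤ e → θ t < e)
    (hinj : ∀ s t, 1 ≤ s → s ≤ e → 1 ≤ t → t ≤ e → θ s = θ t → s = t)
    {a b : ℕ} (ha : 1 ≤ a) (hab : a ≤ b) (hb : b ≤ e - 1) :
    ∃ w : ℕ, gammaInt e θ a b
      = betaR e ((θ a : ℕ) : ZMod e) ((θ (b + 1) : ℕ) : ZMod e) + (w : ℤ) • deltaRoot e := by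
  revert hb
  induction b, hab using Nat.le_induction with
  | base =>
      intro hb
      refine ⟨0, ?_⟩
      have h1 : θ a < e := hmap a ha (by omega)
      have h2 : θ (a + 1) < e := hmap (a + 1) (by omega) (by omega)
      have hne : θ a ≠ θ (a + 1) := fun hc => by
        have := hinj a (a + 1) ha (by omega) (by omega) (by omega) hc; omega
      rw [gammaInt, Finset.Icc_self, Finset.sum_singleton, gammaTheta_eq h1 h2 hne]
      simp
  | succ b hab ih =>
      intro hb
      obtain ⟨w, hw⟩ := ih (by omega)
      have h1 : θ a < e := hmap a ha (by omega)
      have h2 : θ (b + 1) < e := hmap (b + 1) (by omega) (by omega)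
      have h3 : θ (b + 1 + 1) < e := hmap (b + 1 + 1) (by omega) (by omega)
      have hneN : θ (b + 1) ≠ θ (b + 1 + 1) := fun hc => by
        have := hinj (b + 1) (b + 1 + 1) (by omega) (by omega) (by omega) (by omega) hc; omega
      have hne1 : ((θ a : ℕ) : ZMod e) ≠ ((θ (b + 1) : ℕ) : ZMod e) :=
        cast_ne_of_ne h1 h2 (fun hc => by
          have := hinj a (b + 1) ha (by omega) (by omega) (by omega) hc; omega)
      have hne2 : ((θ (b + 1) : ℕ) : ZMod e) ≠ ((θ (b + 1 + 1) : ℕ) : ZMod e) :=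
        cast_ne_of_ne h2 h3 hneN
      obtain ⟨w', hw', hsum⟩ := betaR_add_betaR hne1 hne2
      refine ⟨w + w', ?_⟩
      have hstep : gammaInt e θ a (b + 1) = gammaInt e θ a b + gammaTheta e θ (b + 1) := by
        rw [gammaInt, gammaInt, ← Finset.sum_Icc_succ_top (by omega)]
      rw [hstep, hw, gammaTheta_eq h2 h3 hneN]
      funext r
      have hg := congrFun hsum r
      simp only [Pi.add_apply, smul_delta_eq] at hg ⊢
      push_cast at hg ⊢
      linarith

/-- Characterization of the order from any realized permutation. -/
lemma realizes_char [NeZero e] (he : 1 < e) (P : ConvexPreorderOn e) {θ : ℕ → ℕ}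
    (hbij : Set.BijOn θ (Set.Icc 1 e) (Set.Iio e)) (hre : Realizes e P θ)
    {i j : ZMod e} (hij : i ≠ j) :
    OrdR e P i j ↔ ∃ s t : ℕ, 1 ≤ s ∧ s < t ∧ t ≤ e ∧
      ((θ s : ℕ) : ZMod e) = i ∧ ((θ t : ℕ) : ZMod e) = j := by
  have hmap : ∀ t, 1 ≤ t → t ≤ e → θ t < e := fun t h1 h2 => hbij.1 ⟨h1, h2⟩
  have hinj : ∀ s t, 1 ≤ s → s ≤ e → 1 ≤ t → t ≤ e → θ s = θ t → s = t :=
    fun s t h1 h2 h3 h4 h => hbij.2.1 ⟨h1, h2⟩ ⟨h3, h4⟩ h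
  have hb0 : betaR e i j ∈ PhiPos e := by simpa using betaR_mem hij 0
  constructor
  · intro hord
    have hmem : betaR e i j ∈ {β | β ∈ PhiPos e ∧ GtRel P β (deltaRoot e)} := ⟨hb0, hord.2⟩
    rw [hre.1] at hmem
    obtain ⟨-, a, b, k, ha, hab, hbnd, hk⟩ := hmem
    obtain ⟨w, hw⟩ := gammaInt_decomp he hmap hinj ha hab hbnd
    have hpq : ((θ a : ℕ) : ZMod e) ≠ ((θ (b+1) : ℕ) : ZMod e) :=
      cast_ne_of_ne (hmap a ha (by omega)) (hmap (b+1) (by omega) (by omega))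
        (fun hc => by have := hinj a (b+1) ha (by omega) (by omega) (by omega) hc; omega)
    have heq : betaR e i j + (0 : ℤ) • deltaRoot e
        = betaR e ((θ a : ℕ) : ZMod e) ((θ (b+1) : ℕ) : ZMod e) + (k + w) • deltaRoot e := by
      funext r
      have h1 := congrFun hk r
      have h2 := congrFun hw r
      simp only [Pi.add_apply, smul_delta_eq] at h1 h2 ⊢
      rw [h2] at h1
      linarith
    obtain ⟨hi, hj, -⟩ := decomp_unique he hij hpq heq
    exact ⟨a, b + 1, ha, by omega, by omega, hi.symm, hj.symm⟩
  · rintro ⟨s, t, hs1, hst, hte, hsx, htx⟩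
    obtain ⟨w, hw⟩ := gammaInt_decomp he hmap hinj hs1 (show s ≤ t - 1 by omega)
      (show t - 1 ≤ e - 1 by omega)
    have hb1 : t - 1 + 1 = t := by omega
    rw [hb1, hsx, htx] at hw
    have hmem : betaR e i j ∈ {β | β ∈ PhiPos e ∧ ∃ a b : ℕ, ∃ k : ℤ,
        1 ≤ a ∧ a ≤ b ∧ b ≤ e - 1 ∧ β = k • deltaRoot e + gammaInt e θ a b} := by
      refine ⟨hb0, s, t - 1, -(w : ℤ), hs1, by omega, by omega, ?_⟩
      funext r
      have h2 := congrFun hw r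
      simp only [Pi.add_apply, smul_delta_eq] at h2 ⊢
      rw [h2]
      ring
    rw [← hre.1] at hmem
    exact ⟨hij, hmem.2⟩

end St9
namespace St9
open Finset

variable {e : ℕ}

lemma theta_realizes [NeZero e] (he : 1 < e) (P : ConvexPreorderOn e) :
    Realizes e P (theta P) := by
  have hbij := theta_bijOn P
  have hmap : ∀ t, 1 ≤ t → t ≤ e → theta P t < e := fun t h1 h2 => hbij.1 ⟨h1, h2⟩
  have hinj : ∀ s t, 1 ≤ s → s ≤ e → 1 ≤ t → t ≤ e → theta P s = theta P t → s = t :=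
    fun s t h1 h2 h3 h4 h => hbij.2.1 ⟨h1, h2⟩ ⟨h3, h4⟩ h
  constructor
  · ext β
    simp only [Set.mem_setOf_eq]
    constructor
    · rintro ⟨hβ, hgt⟩
      refine ⟨hβ, ?_⟩
      rcases mem_phiPos_iff.mp hβ with him | ⟨i, j, k, hij, rfl⟩
      · exact absurd ((P.imag_equiv _ _ hβ deltaRoot_mem).mpr
          (Or.inr ⟨him, deltaRoot_imag⟩)).2 hgt.2
      · have hord : OrdR e P i j := (gt_iff_ord P hij k).mp hgt
        obtain ⟨s, t, hs1, hst, hte, hsx, htx⟩ := (ord_iff_pos P hij).mp hord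
        obtain ⟨w, hw⟩ := gammaInt_decomp he hmap hinj hs1 (show s ≤ t - 1 by omega)
          (show t - 1 ≤ e - 1 by omega)
        rw [show t - 1 + 1 = t from by omega] at hw
        rw [theta_cast, theta_cast, hsx, htx] at hw
        refine ⟨s, t - 1, (k : ℤ) - w, hs1, by omega, by omega, ?_⟩
        funext r
        have h2 := congrFun hw r
        simp only [Pi.add_apply, smul_delta_eq] at h2 ⊢
        rw [h2]
        ring
    · rintro ⟨hβ, a, b, k, ha, hab, hb, rfl⟩
      obtain ⟨w, hw⟩ := gammaInt_decomp he hmap hinj ha hab hb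
      rw [theta_cast, theta_cast] at hw
      have hij : thetaZ P a ≠ thetaZ P (b + 1) := fun hc => by
        have := thetaZ_inj P ha (by omega) (by omega) (by omega) hc; omega
      have hord : OrdR e P (thetaZ P a) (thetaZ P (b + 1)) :=
        thetaZ_ord P ha (by omega) (by omega)
      have hform : k • deltaRoot e + gammaInt e (theta P) a b
          = betaR e (thetaZ P a) (thetaZ P (b + 1)) + (k + w) • deltaRoot e := by
        funext r
        have h2 := congrFun hw r
        simp only [Pi.add_apply, smul_delta_eq] at h2 ⊢
        rw [h2]
        ring
      rw [hform] at hβ ⊢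
      have hk : 0 ≤ k + w := phiPos_k_nonneg hij hβ
      refine ⟨hβ, ?_⟩
      have hgt := (gt_iff_ord P hij (k + w).toNat).mpr hord
      rwa [Int.toNat_of_nonneg hk] at hgt
  · ext β
    simp only [Set.mem_setOf_eq]
    constructor
    · rintro ⟨hβ, hlt⟩
      refine ⟨hβ, ?_⟩
      rcases mem_phiPos_iff.mp hβ with him | ⟨p, q, k, hpq, rfl⟩
      · exact absurd ((P.imag_equiv _ _ hβ deltaRoot_mem).mpr
          (Or.inr ⟨him, deltaRoot_imag⟩)).1 hlt.2
      · have hord : OrdR e P q p := (lt_iff_ord P hpq k).mp hlt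
        obtain ⟨s, t, hs1, hst, hte, hsx, htx⟩ := (ord_iff_pos P (Ne.symm hpq)).mp hord
        obtain ⟨w, hw⟩ := gammaInt_decomp he hmap hinj hs1 (show s ≤ t - 1 by omega)
          (show t - 1 ≤ e - 1 by omega)
        rw [show t - 1 + 1 = t from by omega] at hw
        rw [theta_cast, theta_cast, hsx, htx] at hw
        have hrev := betaR_add_betaR_rev (Ne.symm hpq)
        refine ⟨s, t - 1, (k : ℤ) + 1 + w, hs1, by omega, by omega, ?_⟩
        funext r
        have h2 := congrFun hw r
        have h3 := congrFun hrev r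
        simp only [Pi.add_apply, Pi.sub_apply, smul_delta_eq, deltaRoot] at h2 h3 ⊢
        rw [h2]
        linarith
    · rintro ⟨hβ, a, b, k, ha, hab, hb, rfl⟩
      obtain ⟨w, hw⟩ := gammaInt_decomp he hmap hinj ha hab hb
      rw [theta_cast, theta_cast] at hw
      have hij : thetaZ P a ≠ thetaZ P (b + 1) := fun hc => by
        have := thetaZ_inj P ha (by omega) (by omega) (by omega) hc; omega
      have hord : OrdR e P (thetaZ P a) (thetaZ P (b + 1)) :=
        thetaZ_ord P ha (by omega) (by omega)
      have hrev := betaR_add_betaR_rev hij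
      have hform : k • deltaRoot e - gammaInt e (theta P) a b
          = betaR e (thetaZ P (b + 1)) (thetaZ P a) + (k - w - 1) • deltaRoot e := by
        funext r
        have h2 := congrFun hw r
        have h3 := congrFun hrev r
        simp only [Pi.add_apply, Pi.sub_apply, smul_delta_eq, deltaRoot] at h2 h3 ⊢
        rw [h2]
        linarith
      rw [hform] at hβ ⊢
      have hk : 0 ≤ k - w - 1 := phiPos_k_nonneg (Ne.symm hij) hβ
      refine ⟨hβ, ?_⟩
      have hgt := (lt_iff_ord P (Ne.symm hij) (k - w - 1).toNat).mpr hord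
      rwa [Int.toNat_of_nonneg hk] at hgt

lemma realizes_unique [NeZero e] (he : 1 < e) (P : ConvexPreorderOn e) {θ θ' : ℕ → ℕ}
    (hbij : Set.BijOn θ (Set.Icc 1 e) (Set.Iio e))
    (hbij' : Set.BijOn θ' (Set.Icc 1 e) (Set.Iio e))
    (hre : Realizes e P θ) (hre' : Realizes e P θ') :
    Set.EqOn θ θ' (Set.Icc 1 e) := by
  classical
  haveI : Std.Antisymm (ordLE e P) := ⟨ordLE_antisymm P⟩
  have hfacts : ∀ (σ : ℕ → ℕ), Set.BijOn σ (Set.Icc 1 e) (Set.Iio e) → Realizes e P σ →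
      List.Pairwise (ordLE e P) ((List.range e).map (fun n => ((σ (n+1) : ℕ) : ZMod e))) ∧
      ((List.range e).map (fun n => ((σ (n+1) : ℕ) : ZMod e))).Nodup ∧
      ((List.range e).map (fun n => ((σ (n+1) : ℕ) : ZMod e))).toFinset = Finset.univ := by
    intro σ hb hr
    have hmap : ∀ t, 1 ≤ t → t ≤ e → σ t < e := fun t h1 h2 => hb.1 ⟨h1, h2⟩
    have hinj : ∀ s t, 1 ≤ s → s ≤ e → 1 ≤ t → t ≤ e → σ s = σ t → s = t :=
      fun s t h1 h2 h3 h4 h => hb.2.1 ⟨h1, h2⟩ ⟨h3, h4⟩ h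
    have hlen : ((List.range e).map (fun n => ((σ (n+1) : ℕ) : ZMod e))).length = e := by simp
    have hget : ∀ (n : ℕ) (hn : n < ((List.range e).map
          (fun n => ((σ (n+1) : ℕ) : ZMod e))).length),
        ((List.range e).map (fun n => ((σ (n+1) : ℕ) : ZMod e)))[n] = ((σ (n+1) : ℕ) : ZMod e) := by
      intro n hn
      simp only [List.getElem_map, List.getElem_range]
    have hne : ∀ (n m : ℕ), n < e → m < e → n ≠ m →
        ((σ (n+1) : ℕ) : ZMod e) ≠ ((σ (m+1) : ℕ) : ZMod e) := by
      intro n m hn hm hnm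
      exact cast_ne_of_ne (hmap _ (by omega) (by omega)) (hmap _ (by omega) (by omega))
        (fun hc => by have := hinj (n+1) (m+1) (by omega) (by omega) (by omega) (by omega) hc
                      omega)
    refine ⟨?_, ?_, ?_⟩
    · rw [List.pairwise_iff_get]
      intro i j hij
      simp only [List.get_eq_getElem]
      rw [hget i i.isLt, hget j j.isLt]
      have hi : (i : ℕ) < e := by have := i.isLt; omega
      have hj : (j : ℕ) < e := by have := j.isLt; omega
      right
      refine (realizes_char he P hb hr (hne _ _ hi hj (by omega))).mpr ?_
      exact ⟨(i : ℕ) + 1, (j : ℕ) + 1, by omega, by omega, by omega, rfl, rfl⟩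
    · rw [List.nodup_iff_injective_get]
      intro i j hij
      simp only [List.get_eq_getElem] at hij
      rw [hget i i.isLt, hget j j.isLt] at hij
      have hi : (i : ℕ) < e := by have := i.isLt; omega
      have hj : (j : ℕ) < e := by have := j.isLt; omega
      by_contra hc
      exact hne _ _ hi hj (fun h => hc (Fin.ext h)) hij
    · apply Finset.eq_univ_of_forall
      intro x
      rw [List.mem_toFinset, List.mem_iff_getElem]
      obtain ⟨t, ⟨ht1, ht2⟩, htx⟩ := hb.2.2 (show x.val ∈ Set.Iio e from ZMod.val_lt x)
      refine ⟨t - 1, by omega, ?_⟩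
      rw [hget (t-1) (by omega), show t - 1 + 1 = t from by omega, htx, castval]
  obtain ⟨hs1, hn1, ht1⟩ := hfacts θ hbij hre
  obtain ⟨hs2, hn2, ht2⟩ := hfacts θ' hbij' hre'
  have hperm := List.perm_of_nodup_nodup_toFinset_eq hn1 hn2 (ht1.trans ht2.symm)
  have heqL := List.Perm.eq_of_pairwise' hs1 hs2 hperm
  intro t ht
  obtain ⟨ht1', ht2'⟩ := ht
  have hlt : t - 1 < ((List.range e).map (fun n => ((θ (n+1) : ℕ) : ZMod e))).length := by
    simp; omega
  have h1 : ((List.range e).map (fun n => ((θ (n+1) : ℕ) : ZMod e)))[t-1]'hlt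
      = ((θ t : ℕ) : ZMod e) := by
    rw [List.getElem_map, List.getElem_range, show t - 1 + 1 = t from by omega]
  have hlt2 : t - 1 < ((List.range e).map (fun n => ((θ' (n+1) : ℕ) : ZMod e))).length := by
    simp; omega
  have h2 : ((List.range e).map (fun n => ((θ' (n+1) : ℕ) : ZMod e)))[t-1]'hlt2
      = ((θ' t : ℕ) : ZMod e) := by
    rw [List.getElem_map, List.getElem_range, show t - 1 + 1 = t from by omega]
  have hcast : ((θ t : ℕ) : ZMod e) = ((θ' t : ℕ) : ZMod e) := by
    rw [← h1, ← h2]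
    congr 1
  have hv1 : θ t < e := hbij.1 ⟨ht1', ht2'⟩
  have hv2 : θ' t < e := hbij'.1 ⟨ht1', ht2'⟩
  have := congrArg ZMod.val hcast
  rwa [ZMod.val_cast_of_lt hv1, ZMod.val_cast_of_lt hv2] at this

end St9

/-- Every convex preorder realizes a unique residue permutation. -/
theorem statement9 (e : ℕ) (he : 1 < e) (P : ConvexPreorderOn e) :
    (∃ θ : ℕ → ℕ, Set.BijOn θ (Set.Icc 1 e) (Set.Iio e) ∧ Realizes e P θ) ∧
    (∀ θ θ' : ℕ → ℕ, Set.BijOn θ (Set.Icc 1 e) (Set.Iio e) →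
      Set.BijOn θ' (Set.Icc 1 e) (Set.Iio e) →
      Realizes e P θ → Realizes e P θ' → Set.EqOn θ θ' (Set.Icc 1 e)) := by
  haveI : NeZero e := ⟨by omega⟩
  exact ⟨⟨St9.theta P, St9.theta_bijOn P, St9.theta_realizes he P⟩,
    fun θ θ' h1 h2 h3 h4 => St9.realizes_unique he P h1 h2 h3 h4⟩
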